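/- Let n ≥ 2 and let H_1, ..., H_n be Hermitian complex d×d matrices. Define Υ(x) = exp( (i n/(n−1)) ∑_{j=1}^n x^j (x^j − 1/n) H_j ) for x ∈ ℝⁿ, using the matrix exponential. Then: (1) Υ(x) is unitary for every x ∈ ℝⁿ; (2) Υ(e) = I at the barycenter e = (1/n, ..., 1/n); (3) Υ(v_(k)) = exp(i H_k) at each vertex v_(k) of the simplex (where v_(k)^i = δ^i_k). -/

import Mathlib

open Finset Matrix NormedSpace

/-- For `n ≥ 2` and Hermitian matrices `H_j`, the map
`Υ(x) = exp((i n/(n−1)) ∑_j x^j (x^j − 1/n) H_j)` is unitary for every `x ∈ ℝⁿ`,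
equals `I` at the barycenter `e = (1/n, ..., 1/n)`, and equals `exp(i H_k)` at each
vertex `v_(k)` of the simplex. -/
theorem upsilonProperties {n d : ℕ} (hn : 2 ≤ n)
    (H : Fin n → Matrix (Fin d) (Fin d) ℂ)
    (hH : ∀ j, (H j)ᴴ = H j)
    (Υ : (Fin n → ℝ) → Matrix (Fin d) (Fin d) ℂ)
    (hΥ : Υ = fun x => exp
      ((Complex.I * n / (n - 1)) • ∑ j, ((x j * (x j - 1 / n) : ℝ) : ℂ) • H j)) :
    (∀ x : Fin n → ℝ, (Υ x)ᴴ * Υ x = 1) ∧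
      Υ (fun _ => 1 / n) = 1 ∧
      ∀ k, Υ (fun i => if i = k then 1 else 0) = exp (Complex.I • H k) := by
  have hn0 : (n : ℝ) ≠ 0 := by positivity
  have hn1 : (n : ℝ) - 1 ≠ 0 := by
    have : (2 : ℝ) ≤ n := by exact_mod_cast hn
    linarith
  have hn0' : (n : ℂ) ≠ 0 := by exact_mod_cast hn0
  have hn1' : (n : ℂ) - 1 ≠ 0 := by
    intro h
    apply hn1
    have := congrArg Complex.re h
    simpa using this
  subst hΥ
  refine ⟨?_, ?_, ?_⟩
  · intro x
    set c : ℂ := Complex.I * n / (n - 1) with hc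
    set S : Matrix (Fin d) (Fin d) ℂ :=
      ∑ j, ((x j * (x j - 1 / n) : ℝ) : ℂ) • H j with hS
    have hSher : Sᴴ = S := by
      rw [hS, Matrix.conjTranspose_sum]
      refine Finset.sum_congr rfl fun j _ => ?_
      rw [Matrix.conjTranspose_smul, hH]
      congr 1
      simp [Complex.star_def, Complex.conj_ofReal]
    have hcconj : starRingEnd ℂ c = -c := by
      rw [hc]
      simp [map_div₀, neg_div]
    have hA : (c • S)ᴴ = -(c • S) := by
      rw [Matrix.conjTranspose_smul, hSher]
      rw [show star c = -c from hcconj, neg_smul]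
    show (exp (c • S))ᴴ * exp (c • S) = 1
    rw [← Matrix.exp_conjTranspose, hA,
      ← Matrix.exp_add_of_commute _ _ ((Commute.refl (c • S)).neg_left),
      neg_add_cancel, exp_zero]
  · have : ∀ j : Fin n, (((1 : ℝ) / n * (1 / n - 1 / n) : ℝ) : ℂ) • H j = 0 := by
      intro j; simp
    simp only [this, Finset.sum_const_zero, smul_zero, exp_zero]
  · intro k
    have hsum : (∑ j, ((((if j = k then (1:ℝ) else 0)) *
        ((if j = k then (1:ℝ) else 0) - 1 / n) : ℝ) : ℂ) • H j)
        = (((1 : ℝ) - 1 / n : ℝ) : ℂ) • H k := by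
      rw [Finset.sum_eq_single k]
      · simp
      · intro j _ hj; simp [hj]
      · simp
    simp only [hsum]
    rw [smul_smul]
    congr 1
    have : ((((1:ℝ) - 1 / n : ℝ)) : ℂ) = 1 - 1 / n := by push_cast; ring
    rw [this]
    field_simp
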